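/- Let f : 𝕊^n → ℝ be convex (possibly nonsmooth) and X* ∈ S_n. Suppose there exists a subgradient G* ∈ ∂f(X*) satisfying ⟨X − X*, G*⟩ ≥ 0 for all X ∈ S_n, and λ_{n-1}(G*) − λ_n(G*) = δ > 0. Then X* is the unique minimizer of f over S_n, X* = u u ᵀ where u is the unit eigenvector of G* with smallest eigenvalue, and for all X ∈ S_n: ‖X − X*‖_F² ≤ (2/δ)(f(X) − f(X*)). -/

import Mathlib

open Matrix
open scoped RealInnerProductSpace

noncomputable section

/-- Trace (Frobenius) inner product on real square matrices. -/
def tinner {n : ℕ} (A B : Matrix (Fin n) (Fin n) ℝ) : ℝ := ∑ i, ∑ j, A i j * B i j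

/-- Squared Frobenius norm. -/
def frobSq {n : ℕ} (A : Matrix (Fin n) (Fin n) ℝ) : ℝ := ∑ i, ∑ j, (A i j)^2

/-- Frobenius norm. -/
def frobNorm {n : ℕ} (A : Matrix (Fin n) (Fin n) ℝ) : ℝ := Real.sqrt (frobSq A)

/-- The spectrahedron: positive semidefinite matrices with unit trace. -/
def Spectra (n : ℕ) : Set (Matrix (Fin n) (Fin n) ℝ) :=
  {X | X.PosSemidef ∧ X.trace = 1}

/-- Eigenvalues of a symmetric matrix sorted in non-decreasing order, so that
`sortedEigs hA 0` is the smallest eigenvalue (λ_n in the paper's non-increasing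
convention), `sortedEigs hA 1` is the second smallest (λ_{n-1}), and in general
`sortedEigs hA i = λ_{n-i}`. -/
def sortedEigs {n : ℕ} {A : Matrix (Fin n) (Fin n) ℝ} (hA : A.IsHermitian) : Fin n → ℝ :=
  hA.eigenvalues ∘ Tuple.sort hA.eigenvalues

lemma tinner_comm {m : ℕ} (A B : Matrix (Fin m) (Fin m) ℝ) : tinner A B = tinner B A := by
  simp [tinner, mul_comm]

lemma tinner_sub_left {m : ℕ} (A B C : Matrix (Fin m) (Fin m) ℝ) :
    tinner (A - B) C = tinner A C - tinner B C := by
  simp [tinner, sub_mul, Finset.sum_sub_distrib]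

lemma psd_diag_nonneg {m : ℕ} {A : Matrix (Fin m) (Fin m) ℝ} (hA : A.PosSemidef) (i : Fin m) :
    0 ≤ A i i := by
  have h := hA.dotProduct_mulVec_nonneg (Pi.single i 1)
  simpa [dotProduct, mulVec, Pi.single_apply] using h

lemma psd_entry_sq {m : ℕ} {A : Matrix (Fin m) (Fin m) ℝ} (hA : A.PosSemidef) (i j : Fin m) :
    (A i j)^2 ≤ A i i * A j j := by
  rcases eq_or_ne i j with rfl | hij
  · rw [sq]
  · have hsymm : A j i = A i j := by
      have := congrFun (congrFun hA.1 j) i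
      simpa [conjTranspose_apply] using this.symm
    have key : ∀ t : ℝ, 0 ≤ A i i * (t * t) + (2 * A i j) * t + A j j := by
      intro t
      set x : Fin m → ℝ := fun k => (if k = i then t else 0) + (if k = j then 1 else 0) with hx
      have h := hA.dotProduct_mulVec_nonneg x
      have hst : star x = x := by simp
      rw [hst] at h
      have e : x ⬝ᵥ (A *ᵥ x) = t * (A i i * t + A i j) + (A j i * t + A j j) := by
        simp [hx, dotProduct, mulVec, mul_add, add_mul, mul_ite, ite_mul,
          Finset.sum_add_distrib]
        ring
      rw [e] at h
      have : A i i * (t * t) + (2 * A i j) * t + A j j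
          = t * (A i i * t + A i j) + (A j i * t + A j j) := by rw [hsymm]; ring
      linarith [h, this.ge]
    have hd := discrim_le_zero key
    simp only [discrim] at hd
    nlinarith [hd]

lemma frobSq_eq_zero {m : ℕ} {A : Matrix (Fin m) (Fin m) ℝ} (h : frobSq A = 0) : A = 0 := by
  ext i j
  have h1 : ∀ i ∈ Finset.univ, (0:ℝ) ≤ ∑ j, (A i j)^2 :=
    fun i _ => Finset.sum_nonneg fun j _ => sq_nonneg _
  have h2 := (Finset.sum_eq_zero_iff_of_nonneg h1).mp h i (Finset.mem_univ i)
  have h3 := (Finset.sum_eq_zero_iff_of_nonneg (fun j _ => sq_nonneg _)).mp h2 j (Finset.mem_univ j)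
  simpa using pow_eq_zero_iff (n := 2) (two_ne_zero) |>.mp h3

theorem stmt13 {n : ℕ} (f : Matrix (Fin (n+2)) (Fin (n+2)) ℝ → ℝ)
    (hconv : ConvexOn ℝ Set.univ f)
    (Xs : Matrix (Fin (n+2)) (Fin (n+2)) ℝ) (hXs : Xs ∈ Spectra (n+2))
    (Gs : Matrix (Fin (n+2)) (Fin (n+2)) ℝ)
    (hsub : ∀ Y, f Xs + tinner Gs (Y - Xs) ≤ f Y)
    (hvi : ∀ X ∈ Spectra (n+2), 0 ≤ tinner (X - Xs) Gs)
    (hG : Gs.IsHermitian)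
    (δ : ℝ) (hδ : δ = sortedEigs hG 1 - sortedEigs hG 0) (hδpos : 0 < δ) :
    (∀ X ∈ Spectra (n+2), f Xs ≤ f X) ∧
    (∀ X ∈ Spectra (n+2), f X = f Xs → X = Xs) ∧
    (∃ u : Fin (n+2) → ℝ, (∑ i, (u i)^2 = 1) ∧
      Gs *ᵥ u = sortedEigs hG 0 • u ∧ Xs = vecMulVec u u) ∧
    (∀ X ∈ Spectra (n+2), frobSq (X - Xs) ≤ (2 / δ) * (f X - f Xs)) := by
  classical
  set V : Matrix (Fin (n+2)) (Fin (n+2)) ℝ := (hG.eigenvectorUnitary : Matrix (Fin (n+2)) (Fin (n+2)) ℝ) with hVdef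
  have hVV : star V * V = 1 := Matrix.mem_unitaryGroup_iff'.mp hG.eigenvectorUnitary.2
  have hVV' : V * star V = 1 := Matrix.mem_unitaryGroup_iff.mp hG.eigenvectorUnitary.2
  set ev : Fin (n+2) → ℝ := hG.eigenvalues with hev
  -- orthonormality of columns and rows
  have hcol : ∀ a b, (∑ k, V k a * V k b) = if a = b then (1:ℝ) else 0 := by
    intro a b
    have h := Matrix.ext_iff.mpr hVV a b
    simpa [Matrix.mul_apply, Matrix.star_apply, Matrix.one_apply] using h
  have hrow : ∀ j k, (∑ i, V j i * V k i) = if j = k then (1:ℝ) else 0 := by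
    intro j k
    have h := Matrix.ext_iff.mpr hVV' j k
    simpa [Matrix.mul_apply, Matrix.star_apply, Matrix.one_apply] using h
  -- entrywise spectral theorem
  have hGe : ∀ j k, Gs j k = ∑ i, ev i * (V j i * V k i) := by
    intro j k
    have h := Matrix.ext_iff.mpr hG.spectral_theorem j k
    rw [h]
    simp [Matrix.mul_apply, Matrix.diagonal_apply, Matrix.star_apply, mul_ite, ite_mul,
      Finset.sum_ite_eq, Finset.sum_mul]
    refine Finset.sum_congr rfl fun i _ => ?_
    simp only [hVdef, Matrix.IsHermitian.eigenvectorUnitary_apply]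
    ring
  -- sorted eigenvalue facts
  set σ : Equiv.Perm (Fin (n+2)) := Tuple.sort ev with hσ
  set i₀ : Fin (n+2) := σ 0 with hi₀
  set μ : ℝ := ev i₀ with hμ
  have hsorted0 : sortedEigs hG 0 = μ := rfl
  have hmono := Tuple.monotone_sort ev
  have hmin : ∀ i, μ ≤ ev i := by
    intro i
    have h1 : ev i = (ev ∘ σ) (σ.symm i) := by simp
    rw [h1]
    exact hmono (Fin.zero_le _)
  have hgap : ∀ i, i ≠ i₀ → μ + δ ≤ ev i := by
    intro i hi
    have hne : σ.symm i ≠ 0 := by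
      intro h
      exact hi (by rw [← Equiv.apply_symm_apply σ i, h])
    have h1 : (1 : Fin (n+2)) ≤ σ.symm i := by
      rw [Fin.le_def]
      have := Fin.pos_iff_ne_zero.mpr hne
      rw [Fin.lt_def] at this
      rw [Fin.val_one]
      omega
    have h2 : sortedEigs hG 1 ≤ ev i := by
      have h3 : ev i = (ev ∘ σ) (σ.symm i) := by simp
      rw [h3]
      exact hmono h1
    have h4 : sortedEigs hG 1 = μ + δ := by rw [hδ, hsorted0]; ring
    linarith
  -- the quadratic form values
  set y : Matrix (Fin (n+2)) (Fin (n+2)) ℝ → Fin (n+2) → ℝ :=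
    fun X i => ∑ j, ∑ k, V j i * X j k * V k i with hy
  have hy_nonneg : ∀ X : Matrix (Fin (n+2)) (Fin (n+2)) ℝ, X.PosSemidef → ∀ i, 0 ≤ y X i := by
    intro X hX i
    have h := hX.dotProduct_mulVec_nonneg (fun j => V j i)
    have hst : star (fun j => V j i) = fun j => V j i := by simp
    rw [hst] at h
    have e : (fun j => V j i) ⬝ᵥ (X *ᵥ fun j => V j i) = y X i := by
      simp only [hy, dotProduct, mulVec, Finset.mul_sum]
      exact Finset.sum_congr rfl fun j _ => Finset.sum_congr rfl fun k _ => by ring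
    rw [e] at h
    exact h
  have hy_sum : ∀ X : Matrix (Fin (n+2)) (Fin (n+2)) ℝ, (∑ i, y X i) = X.trace := by
    intro X
    have h1 : ∑ i, y X i = ∑ j, ∑ k, X j k * (∑ i, V j i * V k i) := by
      simp only [hy]
      rw [Finset.sum_comm]
      refine Finset.sum_congr rfl fun j _ => ?_
      rw [Finset.sum_comm]
      refine Finset.sum_congr rfl fun k _ => ?_
      rw [Finset.mul_sum]
      exact Finset.sum_congr rfl fun i _ => by ring
    rw [h1]
    simp [hrow, mul_ite, Finset.sum_ite_eq, Matrix.trace, Matrix.diag]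
  have htin : ∀ X : Matrix (Fin (n+2)) (Fin (n+2)) ℝ, tinner X Gs = ∑ i, ev i * y X i := by
    intro X
    have h1 : tinner X Gs = ∑ j, ∑ k, ∑ i, X j k * (ev i * (V j i * V k i)) := by
      simp only [tinner]
      refine Finset.sum_congr rfl fun j _ => Finset.sum_congr rfl fun k _ => ?_
      rw [hGe j k, Finset.mul_sum]
    rw [h1]
    have h2 : (∑ j, ∑ k, ∑ i, X j k * (ev i * (V j i * V k i)))
        = ∑ i, ∑ j, ∑ k, X j k * (ev i * (V j i * V k i)) := by
      rw [show (∑ j, ∑ k, ∑ i, X j k * (ev i * (V j i * V k i)))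
          = ∑ j, ∑ i, ∑ k, X j k * (ev i * (V j i * V k i)) from
        Finset.sum_congr rfl fun j _ => Finset.sum_comm, Finset.sum_comm]
    rw [h2]
    refine Finset.sum_congr rfl fun i _ => ?_
    simp only [hy, Finset.mul_sum]
    exact Finset.sum_congr rfl fun j _ => Finset.sum_congr rfl fun k _ => by ring
  -- key inequality
  have hkey : ∀ X ∈ Spectra (n+2), μ + δ * (1 - y X i₀) ≤ tinner X Gs := by
    intro X hX
    have hsum1 : ∑ i, y X i = 1 := by rw [hy_sum X, hX.2]
    have h0 : ∀ i, 0 ≤ y X i := hy_nonneg X hX.1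
    have hsplit : tinner X Gs - μ = ∑ i, (ev i - μ) * y X i := by
      rw [htin X]
      have h3 : ∑ i, (ev i - μ) * y X i = (∑ i, ev i * y X i) - μ * ∑ i, y X i := by
        rw [Finset.mul_sum, ← Finset.sum_sub_distrib]
        exact Finset.sum_congr rfl fun i _ => by ring
      rw [h3, hsum1]
      ring
    have hsum2 : ∑ i, (if i = i₀ then (0:ℝ) else δ * y X i) = δ * (1 - y X i₀) := by
      have h1 : ∀ i, (if i = i₀ then (0:ℝ) else δ * y X i)
          = δ * y X i - (if i = i₀ then δ * y X i else 0) := by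
        intro i; by_cases h : i = i₀ <;> simp [h]
      simp only [h1]
      rw [Finset.sum_sub_distrib, Finset.sum_ite_eq' Finset.univ i₀ (fun i => δ * y X i),
        ← Finset.mul_sum, hsum1]
      simp
      ring
    have hle : δ * (1 - y X i₀) ≤ ∑ i, (ev i - μ) * y X i := by
      rw [← hsum2]
      refine Finset.sum_le_sum fun i _ => ?_
      by_cases h : i = i₀
      · subst h
        simp [hμ]
      · rw [if_neg h]
        exact mul_le_mul_of_nonneg_right (by linarith [hgap i h]) (h0 i)
    linarith [hsplit ▸ hle]
  -- the eigenvector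
  set u : Fin (n+2) → ℝ := fun j => V j i₀ with hu
  have hunorm : ∑ i, (u i)^2 = 1 := by
    have h := hcol i₀ i₀
    simp only [if_pos rfl, if_true, eq_self_iff_true] at h
    rw [← h]
    exact Finset.sum_congr rfl fun i _ => by rw [hu]; ring
  have heig : Gs *ᵥ u = μ • u := by
    funext j
    have e1 : (Gs *ᵥ u) j = ∑ k, (∑ i, ev i * (V j i * V k i)) * V k i₀ := by
      simp only [mulVec, dotProduct, hu]
      exact Finset.sum_congr rfl fun k _ => by rw [hGe j k]
    rw [e1]
    have e2 : ∑ k, (∑ i, ev i * (V j i * V k i)) * V k i₀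
        = ∑ i, ev i * V j i * (∑ k, V k i * V k i₀) := by
      simp only [Finset.sum_mul, Finset.mul_sum]
      rw [Finset.sum_comm]
      exact Finset.sum_congr rfl fun i _ => Finset.sum_congr rfl fun k _ => by ring
    rw [e2]
    simp only [hcol, mul_ite, mul_one, mul_zero, Finset.sum_ite_eq' Finset.univ i₀]
    simp [hu, hμ]
  -- u uᵀ is in the spectrahedron
  have hUspec : vecMulVec u u ∈ Spectra (n+2) := by
    constructor
    · refine Matrix.PosSemidef.of_dotProduct_mulVec_nonneg ?_ ?_
      · ext j k
        simp [conjTranspose_apply, vecMulVec_apply, mul_comm]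
      · intro x
        have hst : star x = x := by simp
        rw [hst]
        have e : x ⬝ᵥ (vecMulVec u u *ᵥ x) = (∑ j, u j * x j) * (∑ k, u k * x k) := by
          rw [Finset.sum_mul_sum]
          simp only [dotProduct, mulVec, vecMulVec_apply, Finset.mul_sum]
          exact Finset.sum_congr rfl fun j _ => Finset.sum_congr rfl fun k _ => by ring
        rw [e, ← sq]
        exact sq_nonneg _
    · have : (vecMulVec u u).trace = ∑ i, (u i)^2 := by
        simp [Matrix.trace, Matrix.diag, vecMulVec_apply, sq]
      rw [this, hunorm]
  -- tinner of uuᵀ with Gs is μ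
  have htinU : tinner (vecMulVec u u) Gs = μ := by
    have h1 : tinner (vecMulVec u u) Gs = ∑ j, u j * ((Gs *ᵥ u) j) := by
      simp only [tinner, vecMulVec_apply, mulVec, dotProduct, Finset.mul_sum]
      exact Finset.sum_congr rfl fun j _ => Finset.sum_congr rfl fun k _ => by ring
    rw [h1, heig]
    have h2 : ∑ j, u j * ((μ • u) j) = μ * ∑ j, (u j)^2 := by
      rw [Finset.mul_sum]
      refine Finset.sum_congr rfl fun j _ => ?_
      rw [Pi.smul_apply, smul_eq_mul]
      try ring
    rw [h2, hunorm, mul_one]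
  -- tinner Xs Gs = μ and y Xs structure
  have hyXs_sum : ∑ i, y Xs i = 1 := by rw [hy_sum Xs, hXs.2]
  have hyXs_nn : ∀ i, 0 ≤ y Xs i := hy_nonneg Xs hXs.1
  have hXsμ : tinner Xs Gs ≤ μ := by
    have h1 := hvi _ hUspec
    rw [tinner_sub_left, htinU] at h1
    linarith
  have hyXs1 : y Xs i₀ = 1 := by
    have h2 := hkey Xs hXs
    have h3 : y Xs i₀ ≤ ∑ i, y Xs i :=
      Finset.single_le_sum (fun i _ => hyXs_nn i) (Finset.mem_univ i₀)
    rw [hyXs_sum] at h3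
    nlinarith
  have hyXs0 : ∀ i, i ≠ i₀ → y Xs i = 0 := by
    intro i hi
    have hzero : ∑ j ∈ Finset.univ.erase i₀, y Xs j = 0 := by
      have h := Finset.add_sum_erase Finset.univ (y Xs) (Finset.mem_univ i₀)
      rw [hyXs_sum] at h
      linarith [hyXs1, h]
    exact (Finset.sum_eq_zero_iff_of_nonneg (fun j _ => hyXs_nn j)).mp hzero i
      (Finset.mem_erase.mpr ⟨hi, Finset.mem_univ i⟩)
  -- Xs = u uᵀ
  set Z : Matrix (Fin (n+2)) (Fin (n+2)) ℝ := star V * Xs * V with hZ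
  have hZpsd : Z.PosSemidef := by
    have := hXs.1.conjTranspose_mul_mul_same V
    rwa [← Matrix.star_eq_conjTranspose] at this
  have hZdiag : ∀ i, Z i i = y Xs i := by
    intro i
    simp only [hZ, Matrix.mul_apply, Matrix.star_apply, star_trivial, hy, Finset.sum_mul]
    try rw [Finset.sum_comm]
    try exact Finset.sum_congr rfl fun j _ => Finset.sum_congr rfl fun k _ => by ring
  have hZ00 : Z i₀ i₀ = 1 := by rw [hZdiag, hyXs1]
  have hZform : ∀ a b, Z a b = (if a = i₀ then (1:ℝ) else 0) * (if b = i₀ then 1 else 0) := by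
    intro a b
    by_cases ha : a = i₀ <;> by_cases hb : b = i₀
    · subst ha; subst hb; simp [hZ00]
    · subst ha
      have h1 : Z b b = 0 := by rw [hZdiag]; exact hyXs0 b hb
      have h2 := psd_entry_sq hZpsd i₀ b
      rw [h1, mul_zero] at h2
      have h3 : Z i₀ b = 0 := by nlinarith [sq_nonneg (Z i₀ b)]
      simp [h3, hb]
    · subst hb
      have h1 : Z a a = 0 := by rw [hZdiag]; exact hyXs0 a ha
      have h2 := psd_entry_sq hZpsd a i₀
      rw [h1, zero_mul] at h2
      have h3 : Z a i₀ = 0 := by nlinarith [sq_nonneg (Z a i₀)]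
      simp [h3, ha]
    · have h1 : Z a a = 0 := by rw [hZdiag]; exact hyXs0 a ha
      have h2 := psd_entry_sq hZpsd a b
      rw [h1, zero_mul] at h2
      have h3 : Z a b = 0 := by nlinarith [sq_nonneg (Z a b)]
      simp [h3, ha, hb]
  have hXsu : Xs = vecMulVec u u := by
    have hX2 : Xs = V * Z * star V := by
      rw [hZ]
      calc Xs = 1 * Xs * 1 := by rw [one_mul, mul_one]
        _ = (V * star V) * Xs * (V * star V) := by rw [hVV']
        _ = V * (star V * Xs * V) * star V := by
            simp only [Matrix.mul_assoc]
    rw [hX2]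
    ext j k
    have e1 : (V * Z * star V) j k = ∑ b, (∑ a, V j a * Z a b) * V k b := by
      simp only [Matrix.mul_apply, Matrix.star_apply, star_trivial]
    rw [e1]
    have e2 : ∀ b, (∑ a, V j a * Z a b) = V j i₀ * (if b = i₀ then 1 else 0) := by
      intro b
      simp only [hZform, mul_ite, ite_mul, mul_one, mul_zero, one_mul, zero_mul]
      simp [Finset.sum_ite_eq']
    simp only [e2, ite_mul, mul_ite, one_mul, zero_mul, mul_one, mul_zero]
    simp [Finset.sum_ite_eq', vecMulVec_apply, hu]
  -- Frobenius computations
  have htXXs : ∀ X : Matrix (Fin (n+2)) (Fin (n+2)) ℝ, tinner X Xs = y X i₀ := by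
    intro X
    rw [hXsu]
    simp only [tinner, vecMulVec_apply, hy]
    exact Finset.sum_congr rfl fun j _ => Finset.sum_congr rfl fun k _ => by rw [hu]; ring
  have hfrobXs : frobSq Xs = 1 := by
    rw [hXsu]
    have h1 : frobSq (vecMulVec u u) = (∑ j, (u j)^2) * (∑ k, (u k)^2) := by
      rw [Finset.sum_mul_sum]
      simp only [frobSq, vecMulVec_apply]
      exact Finset.sum_congr rfl fun j _ => Finset.sum_congr rfl fun k _ => by ring
    rw [h1, hunorm, mul_one]
  have hfrob : ∀ X : Matrix (Fin (n+2)) (Fin (n+2)) ℝ,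
      frobSq (X - Xs) = frobSq X - 2 * tinner X Xs + frobSq Xs := by
    intro X
    have h1 : ∀ j k, (X j k - Xs j k)^2
        = (X j k)^2 - 2 * (X j k * Xs j k) + (Xs j k)^2 := by intros; ring
    simp only [frobSq, tinner, Matrix.sub_apply, h1, Finset.sum_add_distrib,
      Finset.sum_sub_distrib, ← Finset.mul_sum]
    try ring
  have hfX : ∀ X ∈ Spectra (n+2), frobSq X ≤ 1 := by
    intro X hX
    have h1 : frobSq X ≤ ∑ j, ∑ k, X j j * X k k :=
      Finset.sum_le_sum fun j _ => Finset.sum_le_sum fun k _ => psd_entry_sq hX.1 j k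
    have h2 : ∑ j, ∑ k, X j j * X k k = X.trace * X.trace := by
      rw [Matrix.trace, Finset.sum_mul_sum]
      simp [Matrix.diag]
    rw [h2, hX.2, mul_one] at h1
    exact h1
  -- final quadratic growth bound
  have hquad : ∀ X ∈ Spectra (n+2), frobSq (X - Xs) ≤ (2 / δ) * (f X - f Xs) := by
    intro X hX
    have h1 : frobSq (X - Xs) ≤ 2 * (1 - y X i₀) := by
      rw [hfrob X, htXXs X, hfrobXs]
      have := hfX X hX
      linarith
    have h2 : δ * (1 - y X i₀) ≤ tinner X Gs - μ := by linarith [hkey X hX]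
    have h3 : tinner X Gs - μ ≤ f X - f Xs := by
      have h4 := hsub X
      have h5 : tinner Gs (X - Xs) = tinner X Gs - tinner Xs Gs := by
        rw [tinner_comm, tinner_sub_left]
      have h6 : tinner X Gs - tinner Xs Gs ≥ tinner X Gs - μ := by linarith [hXsμ]
      linarith
    have hδ' : (0:ℝ) < 2 / δ := by positivity
    calc frobSq (X - Xs) ≤ 2 * (1 - y X i₀) := h1
      _ = (2 / δ) * (δ * (1 - y X i₀)) := by field_simp
      _ ≤ (2 / δ) * (f X - f Xs) := by
          exact mul_le_mul_of_nonneg_left (le_trans h2 h3) (le_of_lt hδ')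
  refine ⟨?_, ?_, ⟨u, hunorm, by rw [hsorted0]; exact heig, hXsu⟩, hquad⟩
  · intro X hX
    have h1 := hsub X
    have h2 : 0 ≤ tinner Gs (X - Xs) := by
      rw [tinner_comm]
      exact hvi X hX
    linarith
  · intro X hX heq
    have h1 := hquad X hX
    rw [heq] at h1
    simp only [sub_self, mul_zero] at h1
    have h2 : 0 ≤ frobSq (X - Xs) := by
      exact Finset.sum_nonneg fun j _ => Finset.sum_nonneg fun k _ => sq_nonneg _
    have h3 : frobSq (X - Xs) = 0 := le_antisymm h1 h2
    have h4 := frobSq_eq_zero h3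
    exact sub_eq_zero.mp h4
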